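/- Let p be an odd prime and n even with 2 ≤ n ≤ p−3. Then S_n(p−1) = ∑_{a=1}^{p-1} a^n ≡ p·B_n (mod p²) in ℤ_(p), where B_n is the n-th Bernoulli number (which is p-integral since (p−1) ∤ n). -/

import Mathlib

noncomputable section

/-- `i` in the Gaussian integers. -/
def Ig : GaussianInt := ⟨0, 1⟩

/-- Classical power sum `S_r(N) = ∑_{t=1}^N t^r`. -/
def Sps (r N : ℕ) : ℤ := ∑ t ∈ Finset.Icc 1 N, (t : ℤ) ^ r

/-- Gaussian power sum `F_n(k,m) = ∑_{a=1}^k ∑_{b=1}^m (a+bi)^n`. -/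
def Fg (n k m : ℕ) : GaussianInt :=
  ∑ a ∈ Finset.Icc 1 k, ∑ b ∈ Finset.Icc 1 m, ((a : GaussianInt) + (b : GaussianInt) * Ig) ^ n

/-- Square Gaussian power sum `G_n(N) = F_n(N-1,N-1)`. -/
def Gg (n N : ℕ) : GaussianInt := Fg n (N - 1) (N - 1)


open Finset

variable {p : ℕ} [hp : Fact p.Prime]

/-- If `0 < c < p^(v+1)` then `‖(c : ℚ_[p])⁻¹‖ ≤ p ^ v`. -/
lemma aux_norm_nat_inv_le (c v : ℕ) (hc : 0 < c) (h : c < p ^ (v + 1)) :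
    ‖((c : ℚ_[p]))⁻¹‖ ≤ (p : ℝ) ^ (v : ℤ) := by
  have hc0 : (c : ℚ_[p]) ≠ 0 := Nat.cast_ne_zero.2 hc.ne'
  have key : (p : ℝ) ^ (-(v : ℤ)) ≤ ‖(c : ℚ_[p])‖ := by
    by_contra hcon
    push_neg at hcon
    rw [Padic.norm_lt_pow_iff_norm_le_pow_sub_one] at hcon
    have hcast : ((c : ℤ) : ℚ_[p]) = (c : ℚ_[p]) := by push_cast; ring
    have hdvd : ((p : ℤ) ^ (v + 1)) ∣ (c : ℤ) := by
      rw [← Padic.norm_int_le_pow_iff_dvd, hcast]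
      convert hcon using 2
      push_cast; ring
    have hle := Int.le_of_dvd (by exact_mod_cast hc) hdvd
    have : (p ^ (v + 1) : ℕ) ≤ c := by exact_mod_cast hle
    omega
  rw [norm_inv, inv_le_comm₀ (norm_pos_iff.2 hc0) (zpow_pos (by exact_mod_cast hp.out.pos) _), ← zpow_neg]
  exact key

/-- Faulhaber with the alternate denominator form. -/
lemma aux_faulhaberQ (N m : ℕ) :
    (∑ k ∈ range N, (k : ℚ) ^ m) =
      ∑ i ∈ range (m + 1),
        bernoulli i * (m.choose i) * (N : ℚ) ^ (m + 1 - i) / (m + 1 - i : ℕ) := by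
  rw [sum_range_pow]
  refine Finset.sum_congr rfl fun i hi => ?_
  have him : i ≤ m := by simpa [Nat.lt_succ_iff] using hi
  have h1 : ((m + 1 : ℕ) : ℚ) ≠ 0 := by positivity
  have h2 : ((m + 1 - i : ℕ) : ℚ) ≠ 0 := by
    have : 0 < m + 1 - i := by omega
    exact_mod_cast this.ne'
  have hid : (m.choose i : ℚ) * ((m + 1 : ℕ) : ℚ) = ((m + 1).choose i : ℚ) * ((m + 1 - i : ℕ) : ℚ) := by
    exact_mod_cast congrArg (Nat.cast : ℕ → ℚ) (Nat.choose_mul_succ_eq m i)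
  field_simp
  push_cast at hid
  linear_combination (-(bernoulli i * (N : ℚ) ^ (m + 1 - i))) * hid


lemma aux_term_norm_le (m i : ℕ) (e d : ℤ)
    (hB : ‖((bernoulli i : ℚ) : ℚ_[p])‖ ≤ (p : ℝ) ^ e)
    (hD : ‖(((m + 1 - i : ℕ) : ℚ_[p]))⁻¹‖ ≤ (p : ℝ) ^ d) :
    ‖(((bernoulli i * (m.choose i) * (p : ℚ) ^ (m + 1 - i) / (m + 1 - i : ℕ) : ℚ)) : ℚ_[p])‖
      ≤ (p : ℝ) ^ (e + -((m + 1 - i : ℕ) : ℤ) + d) := by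
  have hp0 : (p : ℝ) ≠ 0 := by exact_mod_cast hp.out.ne_zero
  push_cast
  rw [div_eq_mul_inv, norm_mul, norm_mul, norm_mul]
  have hC : ‖((m.choose i : ℕ) : ℚ_[p])‖ ≤ 1 := by
    have hcast : ((m.choose i : ℕ) : ℚ_[p]) = (((m.choose i : ℕ) : ℤ) : ℚ_[p]) := by push_cast; ring
    rw [hcast]; exact Padic.norm_int_le_one _
  have hP : ‖(p : ℚ_[p]) ^ (m + 1 - i)‖ = (p : ℝ) ^ (-((m + 1 - i : ℕ) : ℤ)) :=
    Padic.norm_p_pow _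
  calc ‖((bernoulli i : ℚ) : ℚ_[p])‖ * ‖((m.choose i : ℕ) : ℚ_[p])‖ *
        ‖(p : ℚ_[p]) ^ (m + 1 - i)‖ * ‖(((m + 1 - i : ℕ) : ℚ_[p]))⁻¹‖
      ≤ (p : ℝ) ^ e * 1 * ((p : ℝ) ^ (-((m + 1 - i : ℕ) : ℤ))) * ((p : ℝ) ^ d) := by
        rw [hP]
        gcongr
    _ = (p : ℝ) ^ (e + -((m + 1 - i : ℕ) : ℤ) + d) := by
        rw [mul_one, ← zpow_add₀ hp0, ← zpow_add₀ hp0]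

lemma aux_bernoulli_norm_le (m : ℕ) : ‖((bernoulli m : ℚ) : ℚ_[p])‖ ≤ (p : ℝ) := by
  induction m using Nat.strong_induction_on with
  | _ m ih =>
    have hfa := aux_faulhaberQ p m
    rw [Finset.sum_range_succ] at hfa
    have h1 : m + 1 - m = 1 := by omega
    rw [h1] at hfa
    have hS : ((∑ k ∈ range p, k ^ m : ℕ) : ℚ) = ∑ k ∈ range p, (k : ℚ) ^ m := by push_cast; rfl
    have key : (p : ℚ) * bernoulli m
        = ((∑ k ∈ range p, k ^ m : ℕ) : ℚ)
          - ∑ i ∈ range m, bernoulli i * (m.choose i) * (p : ℚ) ^ (m + 1 - i) / (m + 1 - i : ℕ) := by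
      rw [hS, hfa]
      simp [Nat.choose_self]
      ring
    have keyp : (p : ℚ_[p]) * ((bernoulli m : ℚ) : ℚ_[p])
        = ((∑ k ∈ range p, k ^ m : ℕ) : ℚ_[p])
          - ∑ i ∈ range m,
            (((bernoulli i * (m.choose i) * (p : ℚ) ^ (m + 1 - i) / (m + 1 - i : ℕ) : ℚ)) : ℚ_[p]) := by
      have := congrArg (fun q : ℚ => (q : ℚ_[p])) key
      push_cast at this ⊢
      convert this using 2
    have hnorm : ‖(p : ℚ_[p]) * ((bernoulli m : ℚ) : ℚ_[p])‖ ≤ 1 := by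
      rw [keyp, sub_eq_add_neg]
      refine le_trans (IsUltrametricDist.norm_add_le_max _ _) (max_le ?_ ?_)
      · have hcast : ((∑ k ∈ range p, k ^ m : ℕ) : ℚ_[p]) = (((∑ k ∈ range p, k ^ m : ℕ) : ℤ) : ℚ_[p]) := by
          push_cast; ring
        rw [hcast]
        exact Padic.norm_int_le_one _
      · rw [norm_neg]
        refine IsUltrametricDist.norm_sum_le_of_forall_le_of_nonneg zero_le_one fun i hi => ?_
        have him : i < m := Finset.mem_range.1 hi
        have hB : ‖((bernoulli i : ℚ) : ℚ_[p])‖ ≤ (p : ℝ) ^ (1 : ℤ) := by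
          rw [zpow_one]; exact ih i him
        have hD : ‖(((m + 1 - i : ℕ) : ℚ_[p]))⁻¹‖ ≤ (p : ℝ) ^ ((m - i : ℕ) : ℤ) := by
          apply aux_norm_nat_inv_le _ _ (by omega)
          have t1 : m - i < 2 ^ (m - i) := Nat.lt_two_pow_self
          have t3 : (2 : ℕ) ^ (m - i + 1) ≤ p ^ (m - i + 1) :=
            Nat.pow_le_pow_left hp.out.two_le _
          have t2 : (2 : ℕ) ^ (m - i) < 2 ^ (m - i + 1) := Nat.pow_lt_pow_succ one_lt_two
          exact lt_of_lt_of_le (by omega) t3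
        refine le_trans (aux_term_norm_le m i 1 _ hB hD) (le_of_eq ?_)
        have hexp : (1 : ℤ) + -((m + 1 - i : ℕ) : ℤ) + ((m - i : ℕ) : ℤ) = 0 := by
          rw [Nat.cast_sub (by omega : i ≤ m + 1), Nat.cast_sub him.le]; push_cast; ring
        rw [hexp, zpow_zero]
    rw [norm_mul, Padic.norm_p] at hnorm
    have hppos : (0:ℝ) < p := by exact_mod_cast hp.out.pos
    rw [inv_mul_le_iff₀ (by positivity)] at hnorm
    simpa using hnorm

lemma aux_bernoulli_odd_norm_le (hodd : Odd p) (k : ℕ) (hk : Odd k) :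
    ‖((bernoulli k : ℚ) : ℚ_[p])‖ ≤ 1 := by
  have hp3 : 3 ≤ p := by
    have h2 := hp.out.two_le
    rcases hodd with ⟨j, hj⟩; omega
  rcases eq_or_ne k 1 with hk1 | hk1
  · subst hk1
    rw [bernoulli_one]
    have : (((-1 / 2 : ℚ)) : ℚ_[p]) = -(((2 : ℕ) : ℚ_[p]))⁻¹ := by push_cast; ring
    rw [this, norm_neg]
    have := aux_norm_nat_inv_le (p := p) 2 0 (by omega) (by rw [pow_one]; omega)
    simpa using this
  · have : bernoulli k = 0 := by
      rw [bernoulli_eq_bernoulli'_of_ne_one hk1]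
      exact bernoulli'_eq_zero_of_odd hk (by rcases hk with ⟨j, hj⟩; omega)
    simp [this]

theorem stmt9 (p n : ℕ) [Fact p.Prime] (hodd : Odd p) (hn : Even n)
    (hn2 : 2 ≤ n) (hn3 : n ≤ p - 3) :
    ‖((Sps n (p - 1) : ℚ_[p]) - (p : ℚ_[p]) * ((bernoulli n : ℚ) : ℚ_[p]))‖ ≤ (p : ℝ) ^ (-(2 : ℤ)) := by
  have hp := (Fact.out : p.Prime)
  have hp3 : 3 ≤ p := by
    have h2 := hp.two_le
    rcases hodd with ⟨j, hj⟩; omega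
  have hSps : (Sps n (p - 1) : ℚ) = ∑ k ∈ Finset.range p, (k : ℚ) ^ n := by
    rw [Sps]
    push_cast
    rw [Finset.range_eq_Ico, Finset.sum_eq_sum_Ico_succ_bot (by omega : 0 < p)]
    rw [Nat.cast_zero, zero_pow (by omega : n ≠ 0), zero_add]
    have hIco : Finset.Ico (0 + 1) p = Finset.Icc 1 (p - 1) := by
      rw [← Finset.Ico_add_one_right_eq_Icc]
      congr 1
      omega
    rw [hIco]
  have hfa := aux_faulhaberQ p n
  rw [Finset.sum_range_succ] at hfa
  rw [show n + 1 - n = 1 by omega] at hfa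
  have key : (Sps n (p - 1) : ℚ) - p * bernoulli n
      = ∑ i ∈ Finset.range n,
          bernoulli i * (n.choose i) * (p : ℚ) ^ (n + 1 - i) / (n + 1 - i : ℕ) := by
    rw [hSps, hfa]
    simp [Nat.choose_self]
    ring
  have keyp : ((Sps n (p - 1) : ℤ) : ℚ_[p]) - (p : ℚ_[p]) * ((bernoulli n : ℚ) : ℚ_[p])
      = ∑ i ∈ Finset.range n,
          (((bernoulli i * (n.choose i) * (p : ℚ) ^ (n + 1 - i) / (n + 1 - i : ℕ) : ℚ)) : ℚ_[p]) := by
    have := congrArg (fun q : ℚ => (q : ℚ_[p])) key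
    push_cast at this ⊢
    convert this using 2
  rw [keyp]
  refine IsUltrametricDist.norm_sum_le_of_forall_le_of_nonneg (by positivity) fun i hi => ?_
  have him : i < n := Finset.mem_range.1 hi
  have hD : ‖(((n + 1 - i : ℕ) : ℚ_[p]))⁻¹‖ ≤ (p : ℝ) ^ (0 : ℤ) := by
    apply aux_norm_nat_inv_le _ _ (by omega)
    rw [pow_one]; omega
  have hp1 : (1 : ℝ) ≤ (p : ℝ) := by exact_mod_cast hp.one_le
  rcases le_or_gt i (n - 2) with hcase | hcase
  · have hB : ‖((bernoulli i : ℚ) : ℚ_[p])‖ ≤ (p : ℝ) ^ (1 : ℤ) := by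
      rw [zpow_one]; exact aux_bernoulli_norm_le i
    refine le_trans (aux_term_norm_le n i 1 0 hB hD) ?_
    apply zpow_le_zpow_right₀ hp1
    have h3 : ((3 : ℕ) : ℤ) ≤ ((n + 1 - i : ℕ) : ℤ) := by exact_mod_cast (by omega : 3 ≤ n + 1 - i)
    omega
  · have hi1 : i = n - 1 := by omega
    have hoddi : Odd i := by
      subst hi1
      exact Nat.Even.sub_odd (by omega) hn odd_one
    have hB : ‖((bernoulli i : ℚ) : ℚ_[p])‖ ≤ (p : ℝ) ^ (0 : ℤ) := by
      rw [zpow_zero]; exact aux_bernoulli_odd_norm_le hodd i hoddi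
    refine le_trans (aux_term_norm_le n i 0 0 hB hD) (le_of_eq ?_)
    congr 1
    have h2 : ((n + 1 - i : ℕ) : ℤ) = 2 := by exact_mod_cast (by omega : n + 1 - i = 2)
    omega
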